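/- Let R be a commutative integral domain and let ⋆ be a semistar operation on R that is stable and of finite type. Let I be a nonzero ideal of R such that I^⋆ ∩ R ≠ R. Then √(I^⋆) ∩ R = √(I^⋆ ∩ R) = ⋂_{P ∈ ⋆-Min(I)} P, the intersection of all quasi-⋆-prime ideals minimal over I. -/

import Mathlib

open Pointwise

/-- A semistar operation on an integral domain `R` with quotient field `K`:
a map `E ↦ E^⋆` on the nonzero `R`-submodules of `K` satisfying the usual axioms.
(The map is defined on all submodules, but the axioms are only required for the
nonzero ones.) -/
structure SemistarOperation (R K : Type*) [CommRing R] [IsDomain R] [Field K]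
    [Algebra R K] [IsFractionRing R K] where
  star : Submodule R K → Submodule R K
  smul_star : ∀ (x : K), x ≠ 0 → ∀ E : Submodule R K, E ≠ ⊥ → star (x • E) = x • star E
  mono : ∀ E F : Submodule R K, E ≠ ⊥ → E ≤ F → star E ≤ star F
  le_star : ∀ E : Submodule R K, E ≠ ⊥ → E ≤ star E
  star_star : ∀ E : Submodule R K, E ≠ ⊥ → star (star E) = star E

namespace SemistarOperation

variable {R K : Type*} [CommRing R] [IsDomain R] [Field K] [Algebra R K] [IsFractionRing R K]
variable (s : SemistarOperation R K)

/-- `⋆` is of finite type: for every nonzero submodule `E`, the module `E^⋆` is the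
union of the `F^⋆` over the nonzero finitely generated submodules `F ⊆ E`. -/
def FiniteType : Prop :=
  ∀ E : Submodule R K, E ≠ ⊥ → ∀ x : K,
    x ∈ s.star E ↔ ∃ F : Submodule R K, F.FG ∧ F ≠ ⊥ ∧ F ≤ E ∧ x ∈ s.star F

/-- `I^⋆`, for an ideal `I` of `R` (viewing `I` as a submodule of `K`). -/
def idealStar (I : Ideal R) : Submodule R K :=
  s.star (Submodule.map (Algebra.linearMap R K) I)

/-- `I^⋆ ∩ R`, as an ideal of `R`. -/
def contract (I : Ideal R) : Ideal R :=
  Submodule.comap (Algebra.linearMap R K) (s.idealStar I)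

/-- A (nonzero) ideal `I` of `R` is a quasi-`⋆`-ideal if `I^⋆ ∩ R = I`. -/
def IsQuasiStarIdeal (I : Ideal R) : Prop :=
  I ≠ ⊥ ∧ s.contract I = I

/-- A nonzero ideal `L` of `R` is `⋆`-finite if `L^⋆ = F^⋆` for some nonzero
finitely generated ideal `F` of `R`. -/
def IsStarFinite (L : Ideal R) : Prop :=
  L ≠ ⊥ ∧ ∃ F : Ideal R, F.FG ∧ F ≠ ⊥ ∧ s.idealStar F = s.idealStar L

/-- `⋆` is stable: it distributes over finite intersections (of nonzero submodules
with nonzero intersection). -/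
def Stable : Prop :=
  ∀ E F : Submodule R K, E ≠ ⊥ → F ≠ ⊥ → E ⊓ F ≠ ⊥ →
    s.star (E ⊓ F) = s.star E ⊓ s.star F

/-- `⋆-Min(I)`: the set of quasi-`⋆`-prime ideals of `R` minimal over `I`. -/
def starMin (I : Ideal R) : Set (Ideal R) :=
  {P | Minimal (fun Q : Ideal R => Q.IsPrime ∧ s.IsQuasiStarIdeal Q ∧ I ≤ Q) P}

/-- A nonzero ideal `I` of `R` is a `⋆`-SFT-ideal if there are a finitely generated
ideal `J ⊆ I` and a positive integer `k` with `a ^ k ∈ J^⋆` for every `a ∈ I^⋆`. -/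
def IsSFT (I : Ideal R) : Prop :=
  I ≠ ⊥ ∧ ∃ J : Ideal R, J.FG ∧ J ≤ I ∧ ∃ k : ℕ, 0 < k ∧
    ∀ a ∈ s.idealStar I, a ^ k ∈ s.idealStar J

/-- `R` is a `⋆`-SFT-ring if every nonzero ideal of `R` is a `⋆`-SFT-ideal. -/
def IsSFTRing : Prop := ∀ I : Ideal R, I ≠ ⊥ → s.IsSFT I

end SemistarOperation

namespace SemistarOperation

open Pointwise

variable {R K : Type*} [CommRing R] [IsDomain R] [Field K] [Algebra R K] [IsFractionRing R K]
variable (s : SemistarOperation R K)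

private lemma algMap_ne_zero {x : R} (hx : x ≠ 0) : algebraMap R K x ≠ 0 := fun h =>
  hx (IsFractionRing.injective R K (by rw [h, map_zero]))

private lemma map_ne_bot {I : Ideal R} (hI : I ≠ ⊥) :
    Submodule.map (Algebra.linearMap R K) I ≠ ⊥ := by
  obtain ⟨x, hxI, hx0⟩ := (Submodule.ne_bot_iff _).mp hI
  exact (Submodule.ne_bot_iff _).mpr ⟨algebraMap R K x, ⟨x, hxI, rfl⟩, algMap_ne_zero hx0⟩

private lemma le_contract {I : Ideal R} (hI : I ≠ ⊥) : I ≤ s.contract I := fun x hx =>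
  s.le_star _ (map_ne_bot hI) ⟨x, hx, rfl⟩

private lemma contract_mono {I P : Ideal R} (hI : I ≠ ⊥) (h : I ≤ P) :
    s.contract I ≤ s.contract P := fun x hx =>
  s.mono _ _ (map_ne_bot hI) (Submodule.map_mono h) hx

private lemma contract_ne_bot {I : Ideal R} (hI : I ≠ ⊥) : s.contract I ≠ ⊥ := fun h =>
  hI (le_bot_iff.mp (h ▸ s.le_contract hI))

private lemma idealStar_contract {I : Ideal R} (hI : I ≠ ⊥) :
    s.idealStar (s.contract I) = s.idealStar I := by
  have h1 : Submodule.map (Algebra.linearMap R K) (s.contract I) ≤ s.idealStar I := by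
    rintro y ⟨x, hx, rfl⟩; exact hx
  refine le_antisymm ?_ (s.mono _ _ (map_ne_bot hI) (Submodule.map_mono (s.le_contract hI)))
  calc s.star (Submodule.map (Algebra.linearMap R K) (s.contract I))
      ≤ s.star (s.star (Submodule.map (Algebra.linearMap R K) I)) :=
        s.mono _ _ (map_ne_bot (s.contract_ne_bot hI)) h1
    _ = s.idealStar I := s.star_star _ (map_ne_bot hI)

private lemma contract_idem {I : Ideal R} (hI : I ≠ ⊥) :
    s.contract (s.contract I) = s.contract I := by
  show Submodule.comap _ (s.idealStar (s.contract I)) = _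
  rw [s.idealStar_contract hI]; rfl

private lemma smul_ne_bot {c : K} (hc : c ≠ 0) {M : Submodule R K} (hM : M ≠ ⊥) :
    c • M ≠ ⊥ := by
  obtain ⟨m, hm, hm0⟩ := (Submodule.ne_bot_iff _).mp hM
  exact (Submodule.ne_bot_iff _).mpr
    ⟨c • m, Submodule.smul_mem_pointwise_smul m c M hm, by
      simpa [smul_eq_mul] using mul_ne_zero hc hm0⟩

private lemma pow_ne_bot {M : Submodule R K} (hM : M ≠ ⊥) (n : ℕ) : M ^ n ≠ ⊥ := by
  obtain ⟨m, hm, hm0⟩ := (Submodule.ne_bot_iff _).mp hM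
  exact (Submodule.ne_bot_iff _).mpr ⟨m ^ n, Submodule.pow_mem_pow _ hm n, pow_ne_zero n hm0⟩

private lemma star_pow {c : K} (hc : c ≠ 0) {M : Submodule R K} (hM : M ≠ ⊥)
    (h : c ∈ s.star M) : ∀ n : ℕ, 0 < n → c ^ n ∈ s.star (M ^ n) := by
  intro n hn
  induction n with
  | zero => exact absurd hn (by omega)
  | succ k ih =>
    rcases Nat.eq_zero_or_pos k with hk | hk
    · subst hk; simpa [pow_one] using h
    · have hw : c ^ k ∈ s.star (M ^ k) := ih hk
      have hsmul_le : c • M ^ k ≤ s.star (M ^ (k + 1)) := by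
        intro u hu
        obtain ⟨y, hy, rfl⟩ := Set.mem_smul_set.mp hu
        by_cases hy0 : y = 0
        · subst hy0; simpa using (s.star (M ^ (k + 1))).zero_mem
        · have h1 : y • M ≤ M ^ (k + 1) := by
            rintro v ⟨w, hw', rfl⟩
            simpa [smul_eq_mul, pow_succ] using Submodule.mul_mem_mul hy hw'
          have h2 : c • y ∈ s.star (y • M) := by
            rw [s.smul_star y hy0 M hM]
            simpa [smul_eq_mul, mul_comm] using Submodule.smul_mem_pointwise_smul c y _ h
          exact s.mono _ _ (smul_ne_bot hy0 hM) h1 h2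
      have h3 : c ^ (k + 1) ∈ s.star (c • M ^ k) := by
        rw [s.smul_star c hc _ (pow_ne_bot hM k)]
        simpa [smul_eq_mul, pow_succ, mul_comm] using
          Submodule.smul_mem_pointwise_smul _ c _ hw
      have h4 : s.star (c • M ^ k) ≤ s.star (M ^ (k + 1)) := by
        calc s.star (c • M ^ k) ≤ s.star (s.star (M ^ (k + 1))) :=
              s.mono _ _ (smul_ne_bot hc (pow_ne_bot hM k)) hsmul_le
          _ = _ := s.star_star _ (pow_ne_bot hM (k + 1))
      exact h4 h3

private lemma ideal_pow_ne_bot {F : Ideal R} (hF : F ≠ ⊥) (n : ℕ) : F ^ n ≠ ⊥ := by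
  obtain ⟨m, hm, hm0⟩ := (Submodule.ne_bot_iff _).mp hF
  exact (Submodule.ne_bot_iff _).mpr ⟨m ^ n, Ideal.pow_mem_pow hm n, pow_ne_zero n hm0⟩

private lemma exists_smul_pow_le {J Q : Ideal R} (hQ : Q ∈ J.minimalPrimes)
    {F : Ideal R} (hFG : F.FG) (hFQ : F ≤ Q) :
    ∃ n : ℕ, 0 < n ∧ ∃ t : R, t ∉ Q ∧ ∀ a ∈ F ^ n, t * a ∈ J := by
  haveI hQp : Q.IsPrime := hQ.1.1
  revert hFQ
  refine Submodule.fg_induction (R := R) (M := R)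
    (motive := fun F _ => F ≤ Q → ∃ n : ℕ, 0 < n ∧ ∃ t : R, t ∉ Q ∧ ∀ a ∈ F ^ n, t * a ∈ J) ?_ ?_ F hFG
  · intro x hxQ
    have hx : x ∈ Q := hxQ (Submodule.mem_span_singleton_self x)
    have hnd : ¬ Disjoint (J : Set R)
        ((Q.primeCompl ⊔ Submonoid.powers x : Submonoid R) : Set R) := by
      intro hd
      obtain ⟨P, hPp, hJP, hPd⟩ := Ideal.exists_le_prime_disjoint J _ hd
      have hPQ : P ≤ Q := by
        intro p hp
        by_contra hpQ
        exact Set.disjoint_left.mp hPd hp (Submonoid.mem_sup_left hpQ)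
      have hQP : Q ≤ P := hQ.2 ⟨hPp, hJP⟩ hPQ
      exact Set.disjoint_left.mp hPd (hQP hx)
        (Submonoid.mem_sup_right (Submonoid.mem_powers x))
    obtain ⟨y, hyJ, hyS⟩ := Set.not_disjoint_iff.mp hnd
    obtain ⟨t, htc, b, hbp, rfl⟩ := Submonoid.mem_sup.mp hyS
    obtain ⟨n, rfl⟩ := hbp
    refine ⟨n + 1, Nat.succ_pos n, t, htc, ?_⟩
    intro a ha
    rw [show Submodule.span R {x} = Ideal.span {x} from rfl, Ideal.span_singleton_pow] at ha
    obtain ⟨r, rfl⟩ := Ideal.mem_span_singleton'.mp ha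
    have e : t * (r * x ^ (n + 1)) = (r * x) * (t * x ^ n) := by ring
    rw [e]
    exact J.mul_mem_left _ hyJ
  · intro M N _ _ hM hN hle
    obtain ⟨n₁, hn₁, t₁, ht₁, h₁⟩ := hM (le_trans le_sup_left hle)
    obtain ⟨n₂, hn₂, t₂, ht₂, h₂⟩ := hN (le_trans le_sup_right hle)
    refine ⟨n₁ + n₂, by omega, t₁ * t₂, fun h => (hQp.mem_or_mem h).elim ht₁ ht₂, ?_⟩
    intro a ha
    have h3 := Ideal.sup_pow_add_le_pow_sup_pow (I := M) (J := N) (n := n₁) (m := n₂) ha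
    obtain ⟨b, hb, c, hc, rfl⟩ := Submodule.mem_sup.mp h3
    have e : t₁ * t₂ * (b + c) = t₂ * (t₁ * b) + t₁ * (t₂ * c) := by ring
    rw [e]
    exact J.add_mem (J.mul_mem_left _ (h₁ b hb)) (J.mul_mem_left _ (h₂ c hc))

private lemma map_pow_eq {F : Ideal R} (n : ℕ) :
    Submodule.map (Algebra.linearMap R K) (F ^ n)
      = (Submodule.map (Algebra.linearMap R K) F) ^ n :=
  Submodule.map_pow (M := F) (Algebra.ofId R K) n

private lemma contract_minimal_prime (hs : s.FiniteType) {J Q : Ideal R} (hJb : J ≠ ⊥)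
    (hJq : s.contract J = J) (hQ : Q ∈ J.minimalPrimes) : s.IsQuasiStarIdeal Q := by
  haveI hQp : Q.IsPrime := hQ.1.1
  have hJQ : J ≤ Q := hQ.1.2
  have hQb : Q ≠ ⊥ := fun h => hJb (le_bot_iff.mp (h ▸ hJQ))
  refine ⟨hQb, le_antisymm ?_ (s.le_contract hQb)⟩
  intro z hz
  by_cases hz0 : z = 0
  · subst hz0; exact Q.zero_mem
  have hz' : algebraMap R K z ∈ s.star (Submodule.map (Algebra.linearMap R K) Q) := hz
  obtain ⟨F, hFG, hFb, hFle, hzF⟩ := (hs _ (map_ne_bot hQb) _).mp hz'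
  obtain ⟨T, hT⟩ := hFG
  have hmem : ∀ y : T, ∃ xr : R, xr ∈ Q ∧ algebraMap R K xr = (y : K) := by
    intro y
    have hyF : (y : K) ∈ F := hT ▸ Submodule.subset_span y.2
    obtain ⟨xr, hxr, hx⟩ := hFle hyF
    exact ⟨xr, hxr, hx⟩
  choose g hg1 hg2 using hmem
  have hmapg : Submodule.map (Algebra.linearMap R K) (Ideal.span (Set.range g)) = F := by
    rw [Ideal.span, Submodule.map_span, ← Set.range_comp]
    have e : (Algebra.linearMap R K) ∘ g = fun y : T => (y : K) := funext fun y => hg2 y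
    rw [e, Subtype.range_coe_subtype]
    rw [show {x : K | x ∈ T} = (T : Set K) from rfl]
    exact hT
  set F₀ : Ideal R := Ideal.span (Set.range g) with hF₀def
  have hF₀G : F₀.FG := Submodule.fg_span (Set.finite_range g)
  have hF₀Q : F₀ ≤ Q := Ideal.span_le.mpr (Set.range_subset_iff.mpr hg1)
  have hF₀b : F₀ ≠ ⊥ := fun h => hFb (by rw [← hmapg, h, Submodule.map_bot])
  obtain ⟨n, hn, t, htQ, hta⟩ := exists_smul_pow_le hQ hF₀G hF₀Q
  have ht0 : algebraMap R K t ≠ 0 := algMap_ne_zero fun h => htQ (h ▸ Q.zero_mem)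
  have hzn : (algebraMap R K z) ^ n
      ∈ s.star (Submodule.map (Algebra.linearMap R K) (F₀ ^ n)) := by
    rw [map_pow_eq]
    exact s.star_pow (algMap_ne_zero hz0) (map_ne_bot hF₀b) (hmapg ▸ hzF) n hn
  have hmem2 : algebraMap R K t • (algebraMap R K z) ^ n
      ∈ s.star (algebraMap R K t • Submodule.map (Algebra.linearMap R K) (F₀ ^ n)) := by
    rw [s.smul_star _ ht0 _ (map_ne_bot (ideal_pow_ne_bot hF₀b n))]
    exact Submodule.smul_mem_pointwise_smul _ _ _ hzn
  have hle2 : algebraMap R K t • Submodule.map (Algebra.linearMap R K) (F₀ ^ n)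
      ≤ Submodule.map (Algebra.linearMap R K) J := by
    intro u hu
    obtain ⟨v, hv, rfl⟩ := Set.mem_smul_set.mp hu
    obtain ⟨a, ha, rfl⟩ := hv
    exact ⟨t * a, hta a ha, by simp [smul_eq_mul, map_mul]⟩
  have hfin : algebraMap R K t • (algebraMap R K z) ^ n ∈ s.idealStar J :=
    s.mono _ _ (smul_ne_bot ht0 (map_ne_bot (ideal_pow_ne_bot hF₀b n))) hle2 hmem2
  have htz : t * z ^ n ∈ s.contract J := by
    show algebraMap R K (t * z ^ n) ∈ s.idealStar J
    rw [map_mul, map_pow]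
    simpa [smul_eq_mul] using hfin
  rw [hJq] at htz
  exact hQp.mem_of_pow_mem n ((hQp.mem_or_mem (hJQ htz)).resolve_left htQ)

end SemistarOperation

/-- Let `⋆` be a stable semistar operation of finite type on the integral domain `R`,
and let `I` be a nonzero ideal of `R` with `I^⋆ ∩ R ≠ R`.  Then
`√(I^⋆) ∩ R = √(I^⋆ ∩ R) = ⋂_{P ∈ ⋆-Min(I)} P`. -/
theorem radical_star_inter_eq_sInf_starMin {R K : Type*} [CommRing R] [IsDomain R]
    [Field K] [Algebra R K] [IsFractionRing R K] (s : SemistarOperation R K)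
    (hstable : s.Stable) (hs : s.FiniteType) (I : Ideal R) (hI : I ≠ ⊥)
    (hne : s.contract I ≠ ⊤) :
    {x : R | ∃ n : ℕ, 0 < n ∧ (algebraMap R K x) ^ n ∈ s.idealStar I} =
        ↑(s.contract I).radical ∧
      (s.contract I).radical = sInf (s.starMin I) := by
  classical
  have hIJ : I ≤ s.contract I := s.le_contract hI
  have hJb : s.contract I ≠ ⊥ := s.contract_ne_bot hI
  have hJq : s.contract (s.contract I) = s.contract I := s.contract_idem hI
  have hrad : ∀ x : R,
      (∃ n : ℕ, 0 < n ∧ (algebraMap R K x) ^ n ∈ s.idealStar I) ↔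
        x ∈ (s.contract I).radical := by
    intro x
    rw [Ideal.mem_radical_iff]
    constructor
    · rintro ⟨n, hn, hx⟩
      exact ⟨n, show algebraMap R K (x ^ n) ∈ s.idealStar I by rwa [map_pow]⟩
    · rintro ⟨n, hx⟩
      rcases Nat.eq_zero_or_pos n with h0 | h0
      · subst h0
        simp only [pow_zero] at hx
        exact absurd ((Ideal.eq_top_iff_one _).mpr hx) hne
      · refine ⟨n, h0, ?_⟩
        have hx' : algebraMap R K (x ^ n) ∈ s.idealStar I := hx
        rwa [map_pow] at hx'
  constructor
  · ext x
    simpa [Set.mem_setOf_eq] using hrad x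
  · apply le_antisymm
    · apply le_sInf
      intro P hP
      obtain ⟨⟨hPp, ⟨hPb, hPq⟩, hIP⟩, hmin⟩ := hP
      have hcle : s.contract I ≤ P := (s.contract_mono hI hIP).trans (le_of_eq hPq)
      calc (s.contract I).radical ≤ P.radical := Ideal.radical_mono hcle
        _ = P := hPp.radical
    · rw [← Ideal.sInf_minimalPrimes]
      apply le_sInf
      intro Q hQ
      apply sInf_le
      have hquasi := s.contract_minimal_prime hs hJb hJq hQ
      refine ⟨⟨hQ.1.1, hquasi, hIJ.trans hQ.1.2⟩, ?_⟩
      rintro Q' ⟨hQ'p, ⟨hQ'b, hQ'q⟩, hIQ'⟩ hle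
      exact hQ.2 ⟨hQ'p, (s.contract_mono hI hIQ').trans (le_of_eq hQ'q)⟩ hle
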